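/- Let G be a graph and π a linear order of V(G). Then for every vertex v, the strong reachability sets satisfy: u ∈ SReach[G^π_fill, π, v] (adjacency in the fill-in graph between u <_π v and v) if and only if there exists a path P in G between u and v such that u is the π-minimum vertex of P and all internal vertices of P are >_π v. Consequently the width of the order π equals max_v (|SReach_n[G,π,v]| − 1) where n = |V(G)|. -/

import Mathlib

variable {V : Type*}

/-- Strong r-reachability. -/
def SReach (G : SimpleGraph V) (π : LinearOrder V) (r : ℕ) (v : V) : Set V :=
  letI := π
  {u | u ≤ v ∧ ∃ p : G.Walk v u, p.IsPath ∧ p.length ≤ r ∧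
      ∀ w ∈ p.support, w ≠ v → w ≠ u → v < w}

/-- One step of the fill-in procedure at vertex `x`: add edges between all
neighbors of `x` preceding `x` in the order. -/
def fillStep (π : LinearOrder V) (H : SimpleGraph V) (x : V) : SimpleGraph V :=
  H ⊔ SimpleGraph.fromRel (fun a b =>
    letI := π
    H.Adj a x ∧ H.Adj b x ∧ a < x ∧ b < x)

def fillList (π : LinearOrder V) : List V → SimpleGraph V → SimpleGraph V
  | [], H => H
  | x :: xs, H => fillList π xs (fillStep π H x)

/-- The fill-in graph `G^π_fill`: process the vertices from the `π`-largest to the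
`π`-smallest, at each step joining all earlier neighbors of the processed vertex. -/
def fillIn [Fintype V] (G : SimpleGraph V) (π : LinearOrder V) : SimpleGraph V :=
  letI := π
  fillList π ((Finset.univ.sort (· ≤ ·)).reverse) G

section Aux

open SimpleGraph

variable [π : LinearOrder V]

/-- The path condition characterizing fill-in adjacency after processing `S`. -/
def Cond (G : SimpleGraph V) (S : Set V) (a b : V) : Prop :=
  a ≠ b ∧ ∃ p : G.Walk a b, p.IsPath ∧
    ∀ w ∈ p.support, w ≠ a → w ≠ b → (w ∈ S ∧ a < w ∧ b < w)

lemma Cond.symm {G : SimpleGraph V} {S : Set V} {a b : V} (h : Cond G S a b) :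
    Cond G S b a := by
  obtain ⟨hab, p, hp, hc⟩ := h
  refine ⟨hab.symm, p.reverse, hp.reverse, fun w hw hwb hwa => ?_⟩
  rw [Walk.support_reverse, List.mem_reverse] at hw
  obtain ⟨h1, h2, h3⟩ := hc w hw hwa hwb
  exact ⟨h1, h3, h2⟩

lemma Cond.mono {G : SimpleGraph V} {S S' : Set V} (hS : S ⊆ S') {a b : V}
    (h : Cond G S a b) : Cond G S' a b := by
  obtain ⟨hab, p, hp, hc⟩ := h
  refine ⟨hab, p, hp, fun w hw hwa hwb => ?_⟩
  obtain ⟨h1, h2, h3⟩ := hc w hw hwa hwb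
  exact ⟨hS h1, h2, h3⟩

lemma cond_empty {G : SimpleGraph V} {a b : V} : Cond G ∅ a b ↔ G.Adj a b := by
  constructor
  · rintro ⟨hab, p, hp, hc⟩
    cases p with
    | nil => exact absurd rfl hab
    | cons h q =>
      rename_i c
      have hca : c ≠ a := by
        rintro rfl
        exact ((Walk.cons_isPath_iff h q).1 hp).2 q.start_mem_support
      by_cases hcb : c = b
      · exact hcb ▸ h
      · have := hc c (by simp [q.start_mem_support]) hca hcb
        simp at this
  · intro h
    refine ⟨h.ne, Walk.cons h Walk.nil, by simp [h.ne], fun w hw hwa hwb => ?_⟩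
    simp only [Walk.support_cons, Walk.support_nil, List.mem_cons,
      List.mem_singleton] at hw
    rcases hw with rfl | rfl | h'
    · exact absurd rfl hwa
    · exact absurd rfl hwb
    · simp at h'

lemma fillStep_adj {G H : SimpleGraph V} {S : Set V} {x : V}
    (hx : ∀ w ∈ S, x < w)
    (hH : ∀ a b, H.Adj a b ↔ Cond G S a b) :
    ∀ a b, (fillStep π H x).Adj a b ↔ Cond G (insert x S) a b := by
  intro a b
  constructor
  · intro h
    rcases h with h | h
    · exact ((hH a b).1 h).mono (Set.subset_insert x S)
    · rw [fromRel_adj] at h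
      obtain ⟨hab, hr⟩ := h
      have key : H.Adj a x ∧ H.Adj b x ∧ a < x ∧ b < x := by
        rcases hr with ⟨h1, h2, h3, h4⟩ | ⟨h1, h2, h3, h4⟩
        · exact ⟨h1, h2, h3, h4⟩
        · exact ⟨h2, h1, h4, h3⟩
      obtain ⟨hax, hbx, hlta, hltb⟩ := key
      obtain ⟨-, p, hp, hpc⟩ := (hH a x).1 hax
      obtain ⟨-, q, hq, hqc⟩ := (hH b x).1 hbx
      classical
      set w : G.Walk a b := p.append q.reverse with hw
      refine ⟨hab, (w.toPath : G.Walk a b), (w.toPath).2, fun z hz hza hzb => ?_⟩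
      have hz' : z ∈ w.support := w.support_toPath_subset hz
      rw [hw, Walk.mem_support_append_iff] at hz'
      rcases hz' with hz' | hz'
      · by_cases hzx : z = x
        · exact ⟨hzx ▸ Set.mem_insert x S, hzx ▸ hlta, hzx ▸ hltb⟩
        · obtain ⟨h1, h2, h3⟩ := hpc z hz' hza hzx
          exact ⟨Set.mem_insert_of_mem _ h1, h2, lt_trans hltb h3⟩
      · rw [Walk.support_reverse, List.mem_reverse] at hz'
        by_cases hzx : z = x
        · exact ⟨hzx ▸ Set.mem_insert x S, hzx ▸ hlta, hzx ▸ hltb⟩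
        · obtain ⟨h1, h2, h3⟩ := hqc z hz' hzb hzx
          exact ⟨Set.mem_insert_of_mem _ h1, lt_trans hlta h3, h2⟩
  · rintro ⟨hab, p, hp, hpc⟩
    classical
    by_cases hint : x ∈ p.support ∧ x ≠ a ∧ x ≠ b
    · obtain ⟨hxs, hxa, hxb⟩ := hint
      obtain ⟨-, hlta, hltb⟩ := hpc x hxs hxa hxb
      set t := p.takeUntil x hxs with ht
      set d := p.dropUntil x hxs with hd
      have hspec : t.append d = p := p.take_spec hxs
      have hnodup : (t.support ++ d.support.tail).Nodup := by
        rw [← Walk.support_append, hspec]; exact hp.support_nodup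
      have hdisj : t.support.Disjoint d.support.tail :=
        fun _ hx1 hx2 => (List.nodup_append.1 hnodup).2.2 _ hx1 _ hx2 rfl
      have hbt : b ∉ t.support := fun hb =>
        hdisj hb (Walk.end_mem_tail_support_of_ne hxb d)
      have had : a ∉ d.support.tail := fun ha => hdisj t.start_mem_support ha
      have Hax : H.Adj a x := by
        rw [hH]
        refine ⟨hxa.symm, t, hp.takeUntil hxs, fun z hz hza hzx => ?_⟩
        have hzp : z ∈ p.support := p.support_takeUntil_subset hxs hz
        have hzb : z ≠ b := fun h => hbt (h ▸ hz)
        obtain ⟨h1, h2, h3⟩ := hpc z hzp hza hzb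
        have hzS : z ∈ S := by
          rcases h1 with h1 | h1
          · exact absurd h1 hzx
          · exact h1
        exact ⟨hzS, h2, hx z hzS⟩
      have Hbx : H.Adj b x := by
        rw [hH]
        refine ⟨hxb.symm, d.reverse, (hp.dropUntil hxs).reverse,
          fun z hz hzb hzx => ?_⟩
        rw [Walk.support_reverse, List.mem_reverse] at hz
        have hza : z ≠ a := by
          intro h
          subst h
          rw [Walk.support_eq_cons d, List.mem_cons] at hz
          rcases hz with hz | hz
          · exact hzx hz
          · exact had hz
        have hzp : z ∈ p.support := p.support_dropUntil_subset hxs hz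
        obtain ⟨h1, h2, h3⟩ := hpc z hzp hza hzb
        have hzS : z ∈ S := by
          rcases h1 with h1 | h1
          · exact absurd h1 hzx
          · exact h1
        exact ⟨hzS, h3, hx z hzS⟩
      exact Or.inr ((fromRel_adj _ a b).2 ⟨hab, Or.inl ⟨Hax, Hbx, hlta, hltb⟩⟩)
    · left
      rw [hH]
      refine ⟨hab, p, hp, fun z hz hza hzb => ?_⟩
      obtain ⟨h1, h2, h3⟩ := hpc z hz hza hzb
      have hzx : z ≠ x := by
        rintro rfl
        exact hint ⟨hz, hza, hzb⟩
      rcases h1 with h1 | h1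
      · exact absurd h1 hzx
      · exact ⟨h1, h2, h3⟩

lemma fillList_adj {G : SimpleGraph V} :
    ∀ (L : List V) (S : Set V) (H : SimpleGraph V),
      L.Pairwise (· > ·) → (∀ y ∈ L, ∀ w ∈ S, y < w) →
      (∀ a b, H.Adj a b ↔ Cond G S a b) →
      ∀ a b, (fillList π L H).Adj a b ↔ Cond G (S ∪ {y | y ∈ L}) a b := by
  intro L
  induction L with
  | nil =>
    intro S H _ _ hH a b
    simpa [fillList] using hH a b
  | cons x xs ih =>
    intro S H hpw hLS hH a b
    have hstep := fillStep_adj (G := G) (H := H) (S := S) (x := x)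
      (hLS x (by simp)) hH
    have heq : (insert x S ∪ {y | y ∈ xs}) = (S ∪ {y | y ∈ x :: xs}) := by
      ext z
      simp [Set.mem_insert_iff, or_assoc, or_comm, or_left_comm]
    have := ih (insert x S) (fillStep π H x)
      (List.pairwise_cons.1 hpw).2
      (fun y hy w hw => by
        rcases hw with rfl | hw
        · exact (List.pairwise_cons.1 hpw).1 y hy
        · exact hLS y (List.mem_cons_of_mem _ hy) w hw)
      hstep a b
    rw [show fillList π (x :: xs) H = fillList π xs (fillStep π H x) from rfl]
    rw [this, heq]

lemma fillIn_adj [Fintype V] {G : SimpleGraph V} :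
    ∀ a b, (fillIn G π).Adj a b ↔ Cond G Set.univ a b := by
  intro a b
  have hpw : ((Finset.univ.sort (· ≤ ·)).reverse : List V).Pairwise (· > ·) := by
    rw [List.pairwise_reverse]
    exact List.sortedLT_iff_pairwise.1 (Finset.sortedLT_sort _)
  have := fillList_adj (G := G) ((Finset.univ.sort (· ≤ ·)).reverse) ∅ G
    hpw (by simp) (fun a b => cond_empty.symm) a b
  rw [show fillIn G π = fillList π ((Finset.univ.sort (· ≤ ·)).reverse) G from rfl,
    this]
  have : (∅ ∪ {y : V | y ∈ (Finset.univ.sort (· ≤ ·)).reverse}) = Set.univ := by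
    ext z
    simp [Finset.mem_sort]
  rw [this]

end Aux

open SimpleGraph

theorem stmt17 [Fintype V] (G : SimpleGraph V) (π : LinearOrder V) :
    (∀ u v : V, π.lt u v →
      ((fillIn G π).Adj u v ↔ ∃ p : G.Walk u v, p.IsPath ∧
        (∀ w ∈ p.support, π.le u w) ∧
        (∀ w ∈ p.support, w ≠ u → w ≠ v → π.lt v w))) ∧
    (∀ v : V, {u | (fillIn G π).Adj u v ∧ π.lt u v}.ncard + 1
        = (SReach G π (Fintype.card V) v).ncard) := by
  letI := π
  have part1 : ∀ u v : V, u < v →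
      ((fillIn G π).Adj u v ↔ ∃ p : G.Walk u v, p.IsPath ∧
        (∀ w ∈ p.support, u ≤ w) ∧
        (∀ w ∈ p.support, w ≠ u → w ≠ v → v < w)) := by
    intro u v huv
    rw [fillIn_adj (π := π)]
    constructor
    · rintro ⟨hab, p, hp, hc⟩
      refine ⟨p, hp, fun w hw => ?_, fun w hw hwu hwv => (hc w hw hwu hwv).2.2⟩
      by_cases hwu : w = u
      · exact le_of_eq hwu.symm
      by_cases hwv : w = v
      · exact hwv ▸ le_of_lt huv
      exact le_of_lt (hc w hw hwu hwv).2.1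
    · rintro ⟨p, hp, h1, h2⟩
      exact ⟨ne_of_lt huv, p, hp, fun w hw hwu hwv =>
        ⟨Set.mem_univ w, lt_trans huv (h2 w hw hwu hwv), h2 w hw hwu hwv⟩⟩
  refine ⟨part1, fun v => ?_⟩
  have hset : SReach G π (Fintype.card V) v
      = insert v {u | (fillIn G π).Adj u v ∧ u < v} := by
    ext u
    simp only [SReach, Set.mem_setOf_eq, Set.mem_insert_iff]
    constructor
    · rintro ⟨huv, p, hp, -, hc⟩
      by_cases huv' : u = v
      · exact Or.inl huv'
      right
      have hlt : u < v := lt_of_le_of_ne huv huv'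
      refine ⟨(part1 u v hlt).2 ⟨p.reverse, hp.reverse, fun w hw => ?_,
        fun w hw hwu hwv => ?_⟩, hlt⟩
      · rw [Walk.support_reverse, List.mem_reverse] at hw
        by_cases hwv : w = v
        · exact hwv ▸ le_of_lt hlt
        by_cases hwu : w = u
        · exact le_of_eq hwu.symm
        exact le_of_lt (lt_trans hlt (hc w hw hwv hwu))
      · rw [Walk.support_reverse, List.mem_reverse] at hw
        exact hc w hw hwv hwu
    · rintro (rfl | ⟨hadj, hlt⟩)
      · exact ⟨le_refl u, Walk.nil, Walk.IsPath.nil, by simp, by simp⟩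
      · obtain ⟨p, hp, h1, h2⟩ := (part1 u v hlt).1 hadj
        refine ⟨le_of_lt hlt, p.reverse, hp.reverse,
          le_of_lt (hp.reverse.length_lt), fun w hw hwv hwu => ?_⟩
        rw [Walk.support_reverse, List.mem_reverse] at hw
        exact h2 w hw hwu hwv
  rw [hset, Set.ncard_insert_of_notMem (by simp)]
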